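/- If a matrix C ∈ ℂ^{m×N} has restricted isometry constant δ_{2s} < 1 of order 2s, then for all x ∈ ℂ^N, ‖Cx‖₂ ≤ √(1 + δ_{2s}) · (‖x‖₂ + ‖x‖₁/√(2s)). (The paper states this with √(1 − δ_{2s}); the correct constant is √(1 + δ_{2s}).) -/

import Mathlib

noncomputable def l1 {n : ℕ} (x : Fin n → ℂ) : ℝ := ∑ i, ‖x i‖
noncomputable def l2 {n : ℕ} (x : Fin n → ℂ) : ℝ := Real.sqrt (∑ i, ‖x i‖ ^ 2)
noncomputable def spar {n : ℕ} (x : Fin n → ℂ) : ℕ := (Function.support x).ncard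

section Aux

variable {n : ℕ}

noncomputable def rstr (T : Finset (Fin n)) (y : Fin n → ℂ) : Fin n → ℂ :=
  fun i => if i ∈ T then y i else 0

noncomputable def rstrC (T : Finset (Fin n)) (y : Fin n → ℂ) : Fin n → ℂ :=
  fun i => if i ∈ T then 0 else y i

lemma rstr_add_rstrC (T : Finset (Fin n)) (y : Fin n → ℂ) :
    rstr T y + rstrC T y = y := by
  funext i; simp [rstr, rstrC]; split_ifs <;> simp

lemma l1_nonneg (y : Fin n → ℂ) : 0 ≤ l1 y :=
  Finset.sum_nonneg fun i _ => norm_nonneg _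

lemma l2_nonneg (y : Fin n → ℂ) : 0 ≤ l2 y := Real.sqrt_nonneg _

lemma l2_eq_norm (x : Fin n → ℂ) : l2 x = ‖(WithLp.toLp 2 x : EuclideanSpace ℂ (Fin n))‖ := by
  simp [EuclideanSpace.norm_eq, l2]

lemma l2_add_le (x y : Fin n → ℂ) : l2 (x + y) ≤ l2 x + l2 y := by
  simp only [l2_eq_norm]
  exact norm_add_le (WithLp.toLp 2 x : EuclideanSpace ℂ (Fin n)) (WithLp.toLp 2 y)

lemma l1_rstr (T : Finset (Fin n)) (y : Fin n → ℂ) :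
    l1 (rstr T y) = ∑ i ∈ T, ‖y i‖ := by
  rw [l1]
  rw [← Finset.sum_subset (Finset.subset_univ T) (f := fun i => ‖rstr T y i‖)]
  · exact Finset.sum_congr rfl fun i hi => by simp [rstr, hi]
  · intro i _ hi; simp [rstr, hi]

lemma l1_split (T : Finset (Fin n)) (y : Fin n → ℂ) :
    l1 y = l1 (rstr T y) + l1 (rstrC T y) := by
  simp only [l1, ← Finset.sum_add_distrib]
  refine Finset.sum_congr rfl fun i _ => ?_
  simp only [rstr, rstrC]
  split_ifs <;> simp

lemma l2_rstr_le (T : Finset (Fin n)) (y : Fin n → ℂ) : l2 (rstr T y) ≤ l2 y := by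
  apply Real.sqrt_le_sqrt
  refine Finset.sum_le_sum fun i _ => ?_
  by_cases h : i ∈ T
  · simp [rstr, h]
  · simp [rstr, h]

lemma support_rstr_subset (T : Finset (Fin n)) (y : Fin n → ℂ) :
    Function.support (rstr T y) ⊆ ↑T := by
  intro i hi
  simp only [Function.mem_support, rstr, ne_eq, ite_eq_right_iff, not_forall] at hi
  exact Finset.mem_coe.2 hi.1

lemma spar_rstr_le (T : Finset (Fin n)) (y : Fin n → ℂ) : spar (rstr T y) ≤ T.card := by
  rw [spar]
  have := Set.ncard_le_ncard (support_rstr_subset T y) T.finite_toSet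
  simpa using this

lemma support_rstrC (T : Finset (Fin n)) (y : Fin n → ℂ) :
    Function.support (rstrC T y) = Function.support y \ ↑T := by
  ext i
  simp only [Function.mem_support, rstrC, Set.mem_diff, Finset.mem_coe]
  split_ifs with h <;> simp [h]

lemma spar_rstrC (T : Finset (Fin n)) (y : Fin n → ℂ) (hT : ↑T ⊆ Function.support y) :
    spar (rstrC T y) = spar y - T.card := by
  rw [spar, support_rstrC, Set.ncard_diff hT (Set.toFinite _), spar]
  simp

lemma l2_le_of_bound {k : ℕ} {t : ℝ} (ht : 0 ≤ t) (y : Fin n → ℂ)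
    (hsp : spar y ≤ k) (hb : ∀ i, ‖y i‖ ≤ t) :
    l2 y ≤ Real.sqrt k * t := by
  classical
  have hsum : ∑ i, ‖y i‖ ^ 2 ≤ (k : ℝ) * t ^ 2 := by
    set S := (Set.toFinite (Function.support y)).toFinset with hS
    have hScard : S.card = spar y := (Set.ncard_eq_toFinset_card _ (Set.toFinite _)).symm
    have h1 : ∑ i, ‖y i‖ ^ 2 = ∑ i ∈ S, ‖y i‖ ^ 2 := by
      refine (Finset.sum_subset (Finset.subset_univ S) ?_).symm
      intro i _ hi
      have : y i = 0 := by
        by_contra h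
        exact hi (by simp [hS, Set.Finite.mem_toFinset, Function.mem_support, h])
      simp [this]
    rw [h1]
    calc ∑ i ∈ S, ‖y i‖ ^ 2 ≤ ∑ _i ∈ S, t ^ 2 :=
          Finset.sum_le_sum fun i _ => pow_le_pow_left₀ (norm_nonneg _) (hb i) 2
      _ = (S.card : ℝ) * t ^ 2 := by simp [mul_comm]
      _ ≤ (k : ℝ) * t ^ 2 := by
          have : (S.card : ℝ) ≤ (k : ℝ) := by exact_mod_cast hScard ▸ hsp
          nlinarith [sq_nonneg t]
  calc l2 y ≤ Real.sqrt ((k : ℝ) * t ^ 2) := Real.sqrt_le_sqrt hsum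
    _ = Real.sqrt k * t := by
        rw [Real.sqrt_mul (Nat.cast_nonneg k), Real.sqrt_sq ht]

lemma exists_top (y : Fin n → ℂ) (k : ℕ) (hk : k ≤ spar y) :
    ∃ T : Finset (Fin n), ↑T ⊆ Function.support y ∧ T.card = k ∧
      ∀ i ∈ T, ∀ j ∉ T, ‖y j‖ ≤ ‖y i‖ := by
  classical
  set S := (Set.toFinite (Function.support y)).toFinset with hS
  have hcard : S.card = spar y := by
    rw [spar, Set.ncard_eq_toFinset_card _ (Set.toFinite _)]
  have hk' : k ≤ S.card := hcard ▸ hk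
  have hP : (S.powersetCard k).Nonempty := Finset.powersetCard_nonempty.2 hk'
  obtain ⟨T, hT, hmax⟩ := Finset.exists_max_image (S.powersetCard k)
    (fun T => ∑ i ∈ T, ‖y i‖) hP
  rw [Finset.mem_powersetCard] at hT
  obtain ⟨hTS, hTcard⟩ := hT
  refine ⟨T, ?_, hTcard, ?_⟩
  · intro i hi
    have := hTS hi
    simpa [hS, Set.Finite.mem_toFinset] using this
  · intro i hi j hj
    by_cases hjs : j ∈ Function.support y
    · have hjS : j ∈ S := by simpa [hS, Set.Finite.mem_toFinset]
      set T' := insert j (T.erase i) with hT'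
      have hjT' : j ∉ T.erase i := fun h => hj (Finset.mem_of_mem_erase h)
      have hT'mem : T' ∈ S.powersetCard k := by
        rw [Finset.mem_powersetCard]
        constructor
        · intro a ha
          rcases Finset.mem_insert.1 ha with rfl | ha
          · exact hjS
          · exact hTS (Finset.mem_of_mem_erase ha)
        · rw [Finset.card_insert_of_notMem hjT', Finset.card_erase_of_mem hi, hTcard]
          have h1 : 0 < T.card := Finset.card_pos.2 ⟨i, hi⟩
          omega
      have h1 : ∑ a ∈ T', ‖y a‖ = ‖y j‖ + (∑ a ∈ T, ‖y a‖ - ‖y i‖) := by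
        rw [hT', Finset.sum_insert hjT', Finset.sum_erase_eq_sub hi]
      have h2 := hmax T' hT'mem
      rw [h1] at h2
      linarith
    · simp [Function.notMem_support.1 hjs]

end Aux

section Main

variable {m N s : ℕ} (C : Matrix (Fin m) (Fin N) ℂ) (δ : ℝ)

lemma rip_sqrt (hδ0 : 0 ≤ δ)
    (hRIP : ∀ z : Fin N → ℂ, spar z ≤ 2 * s →
      (1 - δ) * l2 z ^ 2 ≤ l2 (C.mulVec z) ^ 2 ∧
      l2 (C.mulVec z) ^ 2 ≤ (1 + δ) * l2 z ^ 2)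
    (z : Fin N → ℂ) (hz : spar z ≤ 2 * s) :
    l2 (C.mulVec z) ≤ Real.sqrt (1 + δ) * l2 z := by
  have h := (hRIP z hz).2
  have h0 : 0 ≤ l2 (C.mulVec z) := l2_nonneg _
  have h1 : 0 ≤ l2 z := l2_nonneg _
  calc l2 (C.mulVec z) = Real.sqrt (l2 (C.mulVec z) ^ 2) := (Real.sqrt_sq h0).symm
    _ ≤ Real.sqrt ((1 + δ) * l2 z ^ 2) := Real.sqrt_le_sqrt h
    _ = Real.sqrt (1 + δ) * l2 z := by
        rw [Real.sqrt_mul (by linarith), Real.sqrt_sq h1]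

lemma helper (hs : 1 ≤ s) (hδ0 : 0 ≤ δ)
    (hRIP : ∀ z : Fin N → ℂ, spar z ≤ 2 * s →
      (1 - δ) * l2 z ^ 2 ≤ l2 (C.mulVec z) ^ 2 ∧
      l2 (C.mulVec z) ^ 2 ≤ (1 + δ) * l2 z ^ 2) :
    ∀ n : ℕ, ∀ y : Fin N → ℂ, spar y ≤ n → ∀ t : ℝ, 0 ≤ t → (∀ i, ‖y i‖ ≤ t) →
      l2 (C.mulVec y) ≤
        Real.sqrt (1 + δ) * (Real.sqrt (2 * s) * t + l1 y / Real.sqrt (2 * s)) := by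
  have h2s : (0 : ℝ) < 2 * s := by positivity
  have hsq : Real.sqrt (2 * (s:ℝ)) * Real.sqrt (2 * (s:ℝ)) = 2 * (s:ℝ) :=
    Real.mul_self_sqrt h2s.le
  have hsqpos : 0 < Real.sqrt (2 * s) := Real.sqrt_pos.2 h2s
  intro n
  induction n with
  | zero =>
    intro y hy t ht hb
    have hsp : spar y ≤ 2 * s := le_trans hy (Nat.zero_le _)
    have h1 := rip_sqrt C δ hδ0 hRIP y hsp
    have h2 : l2 y ≤ Real.sqrt (2 * s) * t := by
      have := l2_le_of_bound (k := 2 * s) ht y hsp hb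
      simpa using this
    have h3 : 0 ≤ l1 y / Real.sqrt (2 * s) := div_nonneg (l1_nonneg y) hsqpos.le
    have h4 : 0 ≤ Real.sqrt (1 + δ) := Real.sqrt_nonneg _
    calc l2 (C.mulVec y) ≤ Real.sqrt (1 + δ) * l2 y := h1
      _ ≤ Real.sqrt (1 + δ) * (Real.sqrt (2 * s) * t + l1 y / Real.sqrt (2 * s)) := by
          apply mul_le_mul_of_nonneg_left _ h4
          linarith
  | succ n ih =>
    intro y hy t ht hb
    by_cases hsp : spar y ≤ 2 * s
    · -- base: y itself is sparse
      have h1 := rip_sqrt C δ hδ0 hRIP y hsp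
      have h2 : l2 y ≤ Real.sqrt (2 * s) * t := by
        have := l2_le_of_bound (k := 2 * s) ht y hsp hb
        simpa using this
      have h3 : 0 ≤ l1 y / Real.sqrt (2 * s) := div_nonneg (l1_nonneg y) hsqpos.le
      have h4 : 0 ≤ Real.sqrt (1 + δ) := Real.sqrt_nonneg _
      calc l2 (C.mulVec y) ≤ Real.sqrt (1 + δ) * l2 y := h1
        _ ≤ Real.sqrt (1 + δ) * (Real.sqrt (2 * s) * t + l1 y / Real.sqrt (2 * s)) := by
            apply mul_le_mul_of_nonneg_left _ h4
            linarith
    · push_neg at hsp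
      obtain ⟨T, hTsupp, hTcard, hTtop⟩ := exists_top y (2 * s) hsp.le
      set yT := rstr T y with hyT
      set yc := rstrC T y with hyc
      have hsplit : yT + yc = y := rstr_add_rstrC T y
      have hsparT : spar yT ≤ 2 * s := hTcard ▸ spar_rstr_le T y
      have hsparc : spar yc ≤ n := by
        have h5 : spar yc = spar y - T.card := spar_rstrC T y hTsupp
        rw [hTcard] at h5
        omega
      -- bound for entries of yc
      set t' : ℝ := (∑ i ∈ T, ‖y i‖) / (2 * s) with ht'
      have ht'0 : 0 ≤ t' := div_nonneg (Finset.sum_nonneg fun _ _ => norm_nonneg _) h2s.le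
      have hbc : ∀ j, ‖yc j‖ ≤ t' := by
        intro j
        by_cases hjT : j ∈ T
        · simp [hyc, rstrC, hjT, ht'0]
        · have h1 : ‖yc j‖ = ‖y j‖ := by simp [hyc, rstrC, hjT]
          rw [h1]
          have h2 : (2 * s : ℝ) * ‖y j‖ ≤ ∑ i ∈ T, ‖y i‖ := by
            have : ∑ _i ∈ T, ‖y j‖ ≤ ∑ i ∈ T, ‖y i‖ :=
              Finset.sum_le_sum fun i hi => hTtop i hi j hjT
            calc (2 * s : ℝ) * ‖y j‖ = ∑ _i ∈ T, ‖y j‖ := by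
                  simp [hTcard, mul_comm]
              _ ≤ ∑ i ∈ T, ‖y i‖ := this
          rw [ht', le_div_iff₀ h2s]
          linarith
      have hIH := ih yc hsparc t' ht'0 hbc
      -- the two pieces
      have hT1 := rip_sqrt C δ hδ0 hRIP yT hsparT
      have hT2 : l2 yT ≤ Real.sqrt (2 * s) * t := by
        have hbT : ∀ i, ‖yT i‖ ≤ t := by
          intro i
          by_cases hiT : i ∈ T
          · simpa [hyT, rstr, hiT] using hb i
          · simp [hyT, rstr, hiT, ht]
        have := l2_le_of_bound (k := 2 * s) ht yT hsparT hbT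
        simpa using this
      have htri : l2 (C.mulVec y) ≤ l2 (C.mulVec yT) + l2 (C.mulVec yc) := by
        rw [← hsplit, Matrix.mulVec_add]
        exact l2_add_le _ _
      -- key identity: √(2s) * t' = l1 yT / √(2s)
      have hkey : Real.sqrt (2 * s) * t' = l1 yT / Real.sqrt (2 * s) := by
        rw [ht', l1_rstr, ← hsq]
        field_simp
        rw [Real.sqrt_sq (Real.sqrt_nonneg _)]
      have hl1 : l1 y = l1 yT + l1 yc := l1_split T y
      have h4 : 0 ≤ Real.sqrt (1 + δ) := Real.sqrt_nonneg _
      calc l2 (C.mulVec y) ≤ l2 (C.mulVec yT) + l2 (C.mulVec yc) := htri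
        _ ≤ Real.sqrt (1 + δ) * (Real.sqrt (2 * s) * t) +
            Real.sqrt (1 + δ) * (Real.sqrt (2 * s) * t' + l1 yc / Real.sqrt (2 * s)) := by
            have := hT1.trans (mul_le_mul_of_nonneg_left hT2 h4)
            linarith
        _ = Real.sqrt (1 + δ) * (Real.sqrt (2 * s) * t + l1 y / Real.sqrt (2 * s)) := by
            rw [hkey, hl1, add_div]
            ring

end Main

theorem stmt1 {m N s : ℕ} (C : Matrix (Fin m) (Fin N) ℂ) (δ : ℝ)
    (hs : 1 ≤ s) (hδ0 : 0 ≤ δ) (hδ1 : δ < 1)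
    (hRIP : ∀ z : Fin N → ℂ, spar z ≤ 2 * s →
      (1 - δ) * l2 z ^ 2 ≤ l2 (C.mulVec z) ^ 2 ∧
      l2 (C.mulVec z) ^ 2 ≤ (1 + δ) * l2 z ^ 2) :
    ∀ x : Fin N → ℂ,
      l2 (C.mulVec x) ≤ Real.sqrt (1 + δ) * (l2 x + l1 x / Real.sqrt (2 * s)) := by
  intro x
  have h2s : (0 : ℝ) < 2 * s := by positivity
  have hsqpos : 0 < Real.sqrt (2 * s) := Real.sqrt_pos.2 h2s
  have hsq : Real.sqrt (2 * (s:ℝ)) * Real.sqrt (2 * (s:ℝ)) = 2 * (s:ℝ) :=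
    Real.mul_self_sqrt h2s.le
  have h4 : 0 ≤ Real.sqrt (1 + δ) := Real.sqrt_nonneg _
  by_cases hsp : spar x ≤ 2 * s
  · have h1 := rip_sqrt C δ hδ0 hRIP x hsp
    have h3 : 0 ≤ l1 x / Real.sqrt (2 * s) := div_nonneg (l1_nonneg x) hsqpos.le
    calc l2 (C.mulVec x) ≤ Real.sqrt (1 + δ) * l2 x := h1
      _ ≤ Real.sqrt (1 + δ) * (l2 x + l1 x / Real.sqrt (2 * s)) := by
          apply mul_le_mul_of_nonneg_left _ h4
          linarith
  · push_neg at hsp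
    obtain ⟨T, hTsupp, hTcard, hTtop⟩ := exists_top x (2 * s) hsp.le
    set xT := rstr T x with hxT
    set xc := rstrC T x with hxc
    have hsplit : xT + xc = x := rstr_add_rstrC T x
    have hsparT : spar xT ≤ 2 * s := hTcard ▸ spar_rstr_le T x
    set t' : ℝ := (∑ i ∈ T, ‖x i‖) / (2 * s) with ht'
    have ht'0 : 0 ≤ t' := div_nonneg (Finset.sum_nonneg fun _ _ => norm_nonneg _) h2s.le
    have hbc : ∀ j, ‖xc j‖ ≤ t' := by
      intro j
      by_cases hjT : j ∈ T
      · simp [hxc, rstrC, hjT, ht'0]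
      · have h1 : ‖xc j‖ = ‖x j‖ := by simp [hxc, rstrC, hjT]
        rw [h1]
        have h2 : (2 * s : ℝ) * ‖x j‖ ≤ ∑ i ∈ T, ‖x i‖ := by
          have hle : ∑ _i ∈ T, ‖x j‖ ≤ ∑ i ∈ T, ‖x i‖ :=
            Finset.sum_le_sum fun i hi => hTtop i hi j hjT
          calc (2 * s : ℝ) * ‖x j‖ = ∑ _i ∈ T, ‖x j‖ := by
                simp [hTcard, mul_comm]
            _ ≤ ∑ i ∈ T, ‖x i‖ := hle
        rw [ht', le_div_iff₀ h2s]
        linarith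
    have hIH := helper C δ hs hδ0 hRIP (spar xc) xc le_rfl t' ht'0 hbc
    have hT1 := rip_sqrt C δ hδ0 hRIP xT hsparT
    have hT2 : l2 xT ≤ l2 x := l2_rstr_le T x
    have htri : l2 (C.mulVec x) ≤ l2 (C.mulVec xT) + l2 (C.mulVec xc) := by
      rw [← hsplit, Matrix.mulVec_add]
      exact l2_add_le _ _
    have hkey : Real.sqrt (2 * s) * t' = l1 xT / Real.sqrt (2 * s) := by
      rw [ht', l1_rstr, ← hsq]
      field_simp
      rw [Real.sqrt_sq (Real.sqrt_nonneg _)]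
    have hl1 : l1 x = l1 xT + l1 xc := l1_split T x
    calc l2 (C.mulVec x) ≤ l2 (C.mulVec xT) + l2 (C.mulVec xc) := htri
      _ ≤ Real.sqrt (1 + δ) * l2 x +
          Real.sqrt (1 + δ) * (Real.sqrt (2 * s) * t' + l1 xc / Real.sqrt (2 * s)) := by
          have := hT1.trans (mul_le_mul_of_nonneg_left hT2 h4)
          linarith
      _ = Real.sqrt (1 + δ) * (l2 x + l1 x / Real.sqrt (2 * s)) := by
          rw [hkey, hl1, add_div]
          ring
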